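/- For all U, V ∈ V, the derivation actions of the endomorphisms Π(U,V) and 2Φ(U,V) agree on the bilinear form h: (Π(U,V)).h = 2(Φ(U,V)).h. -/

import Mathlib

open scoped RealInnerProductSpace

noncomputable section

variable {V : Type*} [NormedAddCommGroup V] [InnerProductSpace ℝ V] [FiniteDimensional ℝ V]

/-- The orthogonal projection onto `D`, as a map `V → V`. -/
def projD (D : Submodule ℝ V) (X : V) : V := (D.orthogonalProjection X : V)

/-- The bilinear form `h(X,Y) = ⟪πX, πY⟫`. -/
def hForm (D : Submodule ℝ V) (X Y : V) : ℝ := ⟪projD D X, projD D Y⟫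

/-- The 2-form `ω(X,Y) = h(JX, Y)`. -/
def omForm (J : V →ₗ[ℝ] V) (D : Submodule ℝ V) (X Y : V) : ℝ := hForm D (J X) Y

/-- The standard Kähler curvature-type tensor `Π` of constant holomorphic sectional curvature. -/
def PiT (J : V →ₗ[ℝ] V) (U Vv W : V) : V :=
  (1/4 : ℝ) • (⟪Vv, W⟫ • U - ⟪U, W⟫ • Vv + ⟪J Vv, W⟫ • J U - ⟪J U, W⟫ • J Vv
    - (2 * ⟪J U, Vv⟫) • J W)

/-- The curvature-type tensor `Φ`. -/
def PhiT (J : V →ₗ[ℝ] V) (D : Submodule ℝ V) (U Vv W : V) : V :=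
  (1/8 : ℝ) • (⟪Vv, W⟫ • projD D U - ⟪U, W⟫ • projD D Vv
    + hForm D Vv W • U - hForm D U W • Vv
    + ⟪J Vv, W⟫ • projD D (J U) - ⟪J U, W⟫ • projD D (J Vv)
    + omForm J D Vv W • J U - omForm J D U W • J Vv
    - (2 * ⟪J U, Vv⟫) • projD D (J W) - (2 * omForm J D U Vv) • J W)

/-- The curvature-type tensor `Ψ(U,V)W = −ω(U,V)·J(πW)`. -/
def PsiT (J : V →ₗ[ℝ] V) (D : Submodule ℝ V) (U Vv W : V) : V :=
  -(omForm J D U Vv) • J (projD D W)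

/-- The derivation action of an endomorphism `A` on a bilinear form `T`. -/
def der2 (A : V → V) (T : V → V → ℝ) (X Y : V) : ℝ := -T (A X) Y - T X (A Y)

/-- The derivation action of an endomorphism `A` on a 4-multilinear form `T`. -/
def der4 (A : V → V) (T : V → V → V → V → ℝ) (X Y Z W : V) : ℝ :=
  -T (A X) Y Z W - T X (A Y) Z W - T X Y (A Z) W - T X Y Z (A W)

/-- The 4-form `S₀(X,Y,Z,W) = ⟪S(X,Y)Z, W⟫` associated with an endomorphism-valued 2-form. -/
def form4 (S : V → V → V → V) (X Y Z W : V) : ℝ := ⟪S X Y Z, W⟫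

/-- The 6-multilinear form `(R.S)(U,V,X,Y,Z,W) = (R(U,V).S₀)(X,Y,Z,W)`. -/
def dotRS (R S : V → V → V → V) (U Vv X Y Z W : V) : ℝ :=
  der4 (R U Vv) (form4 S) X Y Z W


section Aux

variable {V : Type*} [NormedAddCommGroup V] [InnerProductSpace ℝ V] [FiniteDimensional ℝ V]

lemma projD_mem (D : Submodule ℝ V) (X : V) : projD D X ∈ D := by
  simpa [projD] using (D.orthogonalProjection X).2

lemma projD_idem (D : Submodule ℝ V) (X : V) : projD D (projD D X) = projD D X := by
  simpa [projD] using (D.starProjection_eq_self_iff).2 (projD_mem D X)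

lemma inner_projD_right (D : Submodule ℝ V) (Z Y : V) :
    ⟪Z, projD D Y⟫ = hForm D Z Y := by
  unfold hForm projD
  show ⟪Z, D.starProjection Y⟫ = ⟪D.starProjection Z, D.starProjection Y⟫
  rw [Submodule.inner_starProjection_left_eq_right, Submodule.starProjection_eq_self_iff.2
    (D.starProjection_apply_mem Y)]

lemma hForm_comm (D : Submodule ℝ V) (X Y : V) : hForm D X Y = hForm D Y X :=
  real_inner_comm _ _

lemma hForm_projD_left (D : Submodule ℝ V) (Z Y : V) :
    hForm D (projD D Z) Y = hForm D Z Y := by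
  unfold hForm; rw [projD_idem]

lemma Jskew (J : V →ₗ[ℝ] V) (hJ2 : ∀ X : V, J (J X) = -X)
    (hJg : ∀ X Y : V, ⟪J X, J Y⟫ = ⟪X, Y⟫) (a b : V) :
    ⟪J a, b⟫ = -⟪a, J b⟫ := by
  have := hJg a (J b)
  rw [hJ2] at this
  simp only [inner_neg_right] at this
  linarith

lemma projD_J (J : V →ₗ[ℝ] V) (hJ2 : ∀ X : V, J (J X) = -X)
    (hJg : ∀ X Y : V, ⟪J X, J Y⟫ = ⟪X, Y⟫)
    (D : Submodule ℝ V) (hJD : ∀ X ∈ D, J X ∈ D) (X : V) :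
    projD D (J X) = J (projD D X) := by
  have h2 : X - projD D X ∈ Dᗮ := by
    simpa [projD] using D.sub_starProjection_mem_orthogonal X
  have hmem : J (X - projD D X) ∈ Dᗮ := by
    rw [Submodule.mem_orthogonal]
    intro u hu
    have h1 : ⟪X - projD D X, J u⟫ = 0 := by
      have := (Submodule.mem_orthogonal D _).1 h2 (J u) (hJD u hu)
      rwa [real_inner_comm] at this
    rw [real_inner_comm, Jskew J hJ2 hJg (X - projD D X) u, h1]
    try rw [neg_zero]
  show D.starProjection (J X) = _
  exact Submodule.eq_starProjection_of_mem_orthogonal' (hJD _ (projD_mem D X)) hmem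
    (by rw [← map_add]; congr 1; unfold projD; abel)

lemma omForm_anti (J : V →ₗ[ℝ] V) (hJ2 : ∀ X : V, J (J X) = -X)
    (hJg : ∀ X Y : V, ⟪J X, J Y⟫ = ⟪X, Y⟫)
    (D : Submodule ℝ V) (hJD : ∀ X ∈ D, J X ∈ D) (X Y : V) :
    omForm J D X Y = -omForm J D Y X := by
  unfold omForm hForm
  rw [projD_J J hJ2 hJg D hJD X, projD_J J hJ2 hJg D hJD Y,
    Jskew J hJ2 hJg (projD D X) (projD D Y)]
  rw [real_inner_comm]

lemma Pi_h (J : V →ₗ[ℝ] V) (D : Submodule ℝ V) (U Vv W Y : V) :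
    hForm D (PiT J U Vv W) Y =
      (1/4) * (⟪Vv, W⟫ * hForm D U Y - ⟪U, W⟫ * hForm D Vv Y
        + ⟪J Vv, W⟫ * omForm J D U Y - ⟪J U, W⟫ * omForm J D Vv Y
        - 2 * ⟪J U, Vv⟫ * omForm J D W Y) := by
  rw [← inner_projD_right]
  unfold PiT
  simp only [inner_smul_left, inner_sub_left, inner_add_left, RCLike.star_def, conj_trivial,
    inner_projD_right, omForm]

lemma Phi_h (J : V →ₗ[ℝ] V) (D : Submodule ℝ V) (U Vv W Y : V) :
    hForm D (PhiT J D U Vv W) Y =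
      (1/8) * (⟪Vv, W⟫ * hForm D U Y - ⟪U, W⟫ * hForm D Vv Y
        + hForm D Vv W * hForm D U Y - hForm D U W * hForm D Vv Y
        + ⟪J Vv, W⟫ * omForm J D U Y - ⟪J U, W⟫ * omForm J D Vv Y
        + omForm J D Vv W * omForm J D U Y - omForm J D U W * omForm J D Vv Y
        - 2 * ⟪J U, Vv⟫ * omForm J D W Y - 2 * omForm J D U Vv * omForm J D W Y) := by
  rw [← inner_projD_right]
  unfold PhiT
  simp only [inner_smul_left, inner_sub_left, inner_add_left, RCLike.star_def, conj_trivial,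
    inner_projD_right, hForm_projD_left, omForm]

end Aux

theorem stmt_8 {V : Type*} [NormedAddCommGroup V] [InnerProductSpace ℝ V]
    [FiniteDimensional ℝ V]
    (J : V →ₗ[ℝ] V) (hJ2 : ∀ X : V, J (J X) = -X)
    (hJg : ∀ X Y : V, ⟪J X, J Y⟫ = ⟪X, Y⟫)
    (D : Submodule ℝ V) (hD2 : Module.finrank ℝ ↥D = 2)
    (hJD : ∀ X ∈ D, J X ∈ D) :
    ∀ U Vv X Y : V,
      der2 (PiT J U Vv) (hForm D) X Y
        = 2 * der2 (PhiT J D U Vv) (hForm D) X Y := by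
  intro U Vv X Y
  simp only [der2]
  rw [hForm_comm D X (PiT J U Vv Y), hForm_comm D X (PhiT J D U Vv Y),
    Pi_h, Pi_h, Phi_h, Phi_h]
  linear_combination (-(1/2) * omForm J D U Vv) * omForm_anti J hJ2 hJg D hJD X Y
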